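/- Exact p-d'Alembertian of the power of the Minkowski Lorentz distance function: fix n ≥ 1, o ∈ ℝ^{n+1}, and conjugate nonzero exponents p, q < 1 (1/p + 1/q = 1). On I⁺(o) := {x : x 0 > o 0 and (x 0 − o 0)² > ∑_{i=1}^n (x i − o i)²}, let u(x) := √((x 0 − o 0)² − ∑_{i=1}^n (x i − o i)²) and u_q := u^q / q. Let G_q be the Minkowski gradient of u_q (time component ∂u_q/∂x 0, spatial components −∂u_q/∂x i), and define the p-gradient vector field X(x) := ((∂u_q/∂x 0)² − ∑_{i=1}^n (∂u_q/∂x i)²)^{(p−2)/2} · G_q(x). Then X(x) = x − o for every x ∈ I⁺(o), and the Euclidean divergence ∑_{j=0}^n ∂(X_j)/∂x_j equals n + 1 identically on I⁺(o). -/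

import Mathlib

noncomputable section

/-- The Minkowski bilinear form on `ℝ^{n+1}`. -/
def minkEta (n : ℕ) (v w : Fin (n + 1) → ℝ) : ℝ :=
  v 0 * w 0 - ∑ i : Fin n, v i.succ * w i.succ

/-- The open chronological future `I⁺(o)` of a point `o` in Minkowski space. -/
def chronoFuture (n : ℕ) (o : Fin (n + 1) → ℝ) : Set (Fin (n + 1) → ℝ) :=
  {x | o 0 < x 0 ∧ 0 < minkEta n (x - o) (x - o)}

/-- The Lorentz distance function from `o`. -/
def lorentzDist (n : ℕ) (o : Fin (n + 1) → ℝ) (x : Fin (n + 1) → ℝ) : ℝ :=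
  Real.sqrt (minkEta n (x - o) (x - o))

/-- The power `u_q = u^q / q` of the Lorentz distance function. -/
def lorentzDistPow (n : ℕ) (o : Fin (n + 1) → ℝ) (q : ℝ) (x : Fin (n + 1) → ℝ) : ℝ :=
  lorentzDist n o x ^ q / q

/-- The partial derivative `∂f/∂x_j` at `x`. -/
def partialDeriv (n : ℕ) (f : (Fin (n + 1) → ℝ) → ℝ) (x : Fin (n + 1) → ℝ)
    (j : Fin (n + 1)) : ℝ :=
  fderiv ℝ f x (Pi.single j 1)

/-- The Minkowski gradient of `f`: time component `∂f/∂x 0`, spatial components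
`−∂f/∂x i`. -/
def minkGrad (n : ℕ) (f : (Fin (n + 1) → ℝ) → ℝ) (x : Fin (n + 1) → ℝ) :
    Fin (n + 1) → ℝ :=
  fun j => if j = 0 then partialDeriv n f x j else -partialDeriv n f x j

/-- The Lorentzian conorm squared `|df|_*² = (∂f/∂x 0)² − ∑ᵢ (∂f/∂x i)²`. -/
def minkConormSq (n : ℕ) (f : (Fin (n + 1) → ℝ) → ℝ) (x : Fin (n + 1) → ℝ) : ℝ :=
  partialDeriv n f x 0 ^ 2 - ∑ i : Fin n, partialDeriv n f x i.succ ^ 2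

/-- The `p`-gradient vector field of `u_q`:
`X = (|d u_q|_*²)^{(p−2)/2} • (Minkowski gradient of u_q)`. -/
def pGradField (n : ℕ) (o : Fin (n + 1) → ℝ) (p q : ℝ) (x : Fin (n + 1) → ℝ) :
    Fin (n + 1) → ℝ :=
  minkConormSq n (lorentzDistPow n o q) x ^ ((p - 2) / 2) •
    minkGrad n (lorentzDistPow n o q) x

/-- The Euclidean divergence `∑_j ∂F_j/∂x_j` of a vector field `F` at `x`. -/
def eucDiv (n : ℕ) (F : (Fin (n + 1) → ℝ) → Fin (n + 1) → ℝ)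
    (x : Fin (n + 1) → ℝ) : ℝ :=
  ∑ j : Fin (n + 1), fderiv ℝ (fun y => F y j) x (Pi.single j 1)

/-- Exact `p`-d'Alembertian of the power `u_q = u^q/q` of the Minkowski Lorentz distance
function: the `p`-gradient field equals `x − o` on `I⁺(o)`, and its Euclidean divergence
is identically `n + 1` there. -/
/- ### Auxiliary machinery -/


def prj (n : ℕ) (j : Fin (n + 1)) : (Fin (n + 1) → ℝ) →L[ℝ] ℝ :=
  ContinuousLinearMap.proj (R := ℝ) (φ := fun _ : Fin (n + 1) => ℝ) j

@[simp] lemma prj_apply (n : ℕ) (j : Fin (n + 1)) (v : Fin (n + 1) → ℝ) :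
    prj n j v = v j := rfl

def sFun (n : ℕ) (o x : Fin (n + 1) → ℝ) : ℝ :=
  (x 0 - o 0) * (x 0 - o 0) - ∑ i : Fin n, (x i.succ - o i.succ) * (x i.succ - o i.succ)

lemma sFun_eq (n : ℕ) (o x : Fin (n + 1) → ℝ) : minkEta n (x - o) (x - o) = sFun n o x := rfl

lemma continuous_sFun (n : ℕ) (o : Fin (n + 1) → ℝ) : Continuous (sFun n o) := by
  unfold sFun
  refine Continuous.sub (by fun_prop) ?_
  exact continuous_finset_sum _ fun i _ => by fun_prop

def dS (n : ℕ) (o x : Fin (n + 1) → ℝ) : (Fin (n + 1) → ℝ) →L[ℝ] ℝ :=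
  (2 * (x 0 - o 0)) • prj n 0 -
    ∑ i : Fin n, (2 * (x i.succ - o i.succ)) • prj n i.succ

lemma hasFDerivAt_sFun (n : ℕ) (o x : Fin (n + 1) → ℝ) :
    HasFDerivAt (sFun n o) (dS n o x) x := by
  have h : ∀ j : Fin (n + 1),
      HasFDerivAt (fun y : Fin (n + 1) → ℝ => (y j - o j) * (y j - o j))
        ((2 * (x j - o j)) • prj n j) x := by
    intro j
    have hp : HasFDerivAt (fun y : Fin (n + 1) → ℝ => y j - o j) (prj n j) x :=
      (hasFDerivAt_apply j x).sub_const (o j)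
    have h2 := hp.fun_mul hp
    refine h2.congr_fderiv ?_
    ext v
    simp
    ring
  exact (h 0).sub (HasFDerivAt.fun_sum (fun i (_ : i ∈ Finset.univ) => h i.succ))

lemma dS_apply_single (n : ℕ) (o x : Fin (n + 1) → ℝ) (j : Fin (n + 1)) :
    dS n o x (Pi.single j 1) = (if j = 0 then 1 else -1) * (2 * (x j - o j)) := by
  induction j using Fin.cases with
  | zero =>
      simp [dS, Pi.single_apply, Fin.succ_ne_zero]
  | succ k =>
      simp [dS, Pi.single_apply, Fin.succ_inj, (Fin.succ_ne_zero k),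
        Finset.sum_ite_eq']

lemma partialDeriv_lorentzDistPow (n : ℕ) (o : Fin (n + 1) → ℝ) (q : ℝ) (hq0 : q ≠ 0)
    (x : Fin (n + 1) → ℝ) (hx : 0 < sFun n o x) (j : Fin (n + 1)) :
    partialDeriv n (lorentzDistPow n o q) x j =
      (if j = 0 then 1 else -1) * (sFun n o x ^ (q / 2 - 1) * (x j - o j)) := by
  have hopen : IsOpen {y | 0 < sFun n o y} :=
    isOpen_lt continuous_const (continuous_sFun n o)
  have hev : lorentzDistPow n o q =ᶠ[nhds x] fun y => q⁻¹ * sFun n o y ^ (q / 2) := by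
    filter_upwards [hopen.mem_nhds hx] with y hy
    have hy' : (0 : ℝ) ≤ sFun n o y := le_of_lt hy
    simp only [lorentzDistPow, lorentzDist, sFun_eq]
    rw [Real.sqrt_eq_rpow, ← Real.rpow_mul hy', show (1:ℝ)/2 * q = q/2 by ring,
      div_eq_inv_mul]
  have hD : HasFDerivAt (fun y => q⁻¹ * sFun n o y ^ (q / 2))
      (q⁻¹ • ((q / 2 * sFun n o x ^ (q / 2 - 1)) • dS n o x)) x :=
    (((hasFDerivAt_sFun n o x).rpow_const (Or.inl hx.ne')).const_mul q⁻¹)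
  rw [partialDeriv, hev.fderiv_eq, hD.fderiv, ContinuousLinearMap.smul_apply,
    ContinuousLinearMap.smul_apply, dS_apply_single]
  split_ifs <;> simp only [smul_eq_mul] <;> field_simp <;> ring

lemma minkGrad_eq (n : ℕ) (o : Fin (n + 1) → ℝ) (q : ℝ) (hq0 : q ≠ 0)
    (x : Fin (n + 1) → ℝ) (hx : 0 < sFun n o x) :
    minkGrad n (lorentzDistPow n o q) x =
      fun j => sFun n o x ^ (q / 2 - 1) * (x j - o j) := by
  funext j
  simp only [minkGrad, partialDeriv_lorentzDistPow n o q hq0 x hx]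
  split_ifs <;> ring

lemma conorm_eq (n : ℕ) (o : Fin (n + 1) → ℝ) (q : ℝ) (hq0 : q ≠ 0)
    (x : Fin (n + 1) → ℝ) (hx : 0 < sFun n o x) :
    minkConormSq n (lorentzDistPow n o q) x = sFun n o x ^ (q - 1) := by
  have key : (sFun n o x ^ (q / 2 - 1)) ^ (2 : ℕ) = sFun n o x ^ (q - 2) := by
    rw [← Real.rpow_natCast (sFun n o x ^ (q / 2 - 1)) 2, ← Real.rpow_mul hx.le]
    norm_num
    ring_nf
  have step1 : minkConormSq n (lorentzDistPow n o q) x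
      = sFun n o x ^ (q - 2) * sFun n o x := by
    simp only [minkConormSq, partialDeriv_lorentzDistPow n o q hq0 x hx, reduceIte]
    have : ∀ i : Fin n, ((if (i.succ : Fin (n + 1)) = 0 then (1:ℝ) else -1) *
        (sFun n o x ^ (q / 2 - 1) * (x i.succ - o i.succ))) ^ 2
        = sFun n o x ^ (q - 2) * ((x i.succ - o i.succ) * (x i.succ - o i.succ)) := by
      intro i
      rw [if_neg (Fin.succ_ne_zero i)]
      rw [show ((-1 : ℝ) * (sFun n o x ^ (q / 2 - 1) * (x i.succ - o i.succ))) ^ 2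
        = (sFun n o x ^ (q / 2 - 1)) ^ (2:ℕ) * ((x i.succ - o i.succ) * (x i.succ - o i.succ))
        by ring, key]
    rw [Finset.sum_congr rfl fun i _ => this i, ← Finset.mul_sum]
    rw [show ((1:ℝ) * (sFun n o x ^ (q / 2 - 1) * (x 0 - o 0))) ^ 2
      = (sFun n o x ^ (q / 2 - 1)) ^ (2:ℕ) * ((x 0 - o 0) * (x 0 - o 0)) by ring, key]
    rw [sFun]
    ring
  rw [step1, show q - 1 = (q - 2) + 1 by ring, Real.rpow_add hx, Real.rpow_one]

lemma pGradField_eq (n : ℕ) (o : Fin (n + 1) → ℝ) (p q : ℝ) (hp0 : p ≠ 0) (hq0 : q ≠ 0)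
    (hpq : 1 / p + 1 / q = 1) (x : Fin (n + 1) → ℝ) (hx : x ∈ chronoFuture n o) :
    pGradField n o p q x = x - o := by
  have hs : 0 < sFun n o x := by rw [← sFun_eq]; exact hx.2
  funext j
  rw [pGradField, Pi.smul_apply, conorm_eq n o q hq0 x hs, minkGrad_eq n o q hq0 x hs]
  have hpq' : p + q = p * q := by
    field_simp at hpq
    linarith
  have hexp : (q - 1) * ((p - 2) / 2) + (q / 2 - 1) = 0 := by
    linear_combination (-(1:ℝ)/2) * hpq'
  rw [smul_eq_mul, ← Real.rpow_mul hs.le, ← mul_assoc, ← Real.rpow_add hs, hexp,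
    Real.rpow_zero, one_mul]
  rfl

theorem lorentzDistPow_p_dalembertian (n : ℕ) (hn : 1 ≤ n) (o : Fin (n + 1) → ℝ)
    (p q : ℝ) (hp0 : p ≠ 0) (hq0 : q ≠ 0) (hp1 : p < 1) (hq1 : q < 1)
    (hpq : 1 / p + 1 / q = 1) :
    ∀ x ∈ chronoFuture n o,
      pGradField n o p q x = x - o ∧
      eucDiv n (pGradField n o p q) x = (n : ℝ) + 1 := by
  intro x hx
  refine ⟨pGradField_eq n o p q hp0 hq0 hpq x hx, ?_⟩
  have hopen : IsOpen (chronoFuture n o) := by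
    have h1 : IsOpen {y : Fin (n + 1) → ℝ | o 0 < y 0} :=
      isOpen_lt continuous_const (continuous_apply 0)
    have h2 : IsOpen {y : Fin (n + 1) → ℝ | 0 < minkEta n (y - o) (y - o)} := by
      refine isOpen_lt continuous_const ?_
      simp only [sFun_eq]
      exact continuous_sFun n o
    exact h1.inter h2
  have hcomp : ∀ j : Fin (n + 1),
      fderiv ℝ (fun y => pGradField n o p q y j) x (Pi.single j 1) = 1 := by
    intro j
    have hev : (fun y => pGradField n o p q y j) =ᶠ[nhds x] fun y => y j - o j := by
      filter_upwards [hopen.mem_nhds hx] with y hy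
      rw [pGradField_eq n o p q hp0 hq0 hpq y hy]
      rfl
    have hD : HasFDerivAt (fun y : Fin (n + 1) → ℝ => y j - o j) (prj n j) x :=
      (hasFDerivAt_apply j x).sub_const (o j)
    rw [hev.fderiv_eq, hD.fderiv, prj_apply, Pi.single_eq_same]
  rw [eucDiv]
  simp only [hcomp]
  simp
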